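/- On an n-dimensional inner product space, contraction of a power of the metric satisfies c_g(g^p) = p(n-p+1) g^{p-1} for 1 ≤ p ≤ n. -/

import Mathlib

open scoped RealInnerProductSpace BigOperators

/-- Double forms of bidegree `(p,q)` on `V`, modelled as real-valued maps on
`p`-tuples tensor `q`-tuples of vectors (to be evaluated on alternating arguments). -/
abbrev DoubleForm (V : Type*) (p q : ℕ) := (Fin p → V) → (Fin q → V) → ℝ

/-- The metric (inner product) as a `(1,1)` double form. -/
noncomputable def gForm (V : Type*) [NormedAddCommGroup V] [InnerProductSpace ℝ V] :
    DoubleForm V 1 1 := fun v w => (inner ℝ (v 0) (w 0) : ℝ)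

/-- The product of double forms in the bigraded algebra `Ω(V)`, given by the
standard (normalized) shuffle/permutation sum in each slot. -/
noncomputable def dfMul {V : Type*} {p q r s : ℕ}
    (ω : DoubleForm V p q) (η : DoubleForm V r s) : DoubleForm V (p + r) (q + s) :=
  fun v w =>
    (1 / ((p.factorial * r.factorial * q.factorial * s.factorial : ℕ) : ℝ)) *
      ∑ σ : Equiv.Perm (Fin (p + r)), ∑ τ : Equiv.Perm (Fin (q + s)),
        ((Equiv.Perm.sign σ : ℤ) : ℝ) * ((Equiv.Perm.sign τ : ℤ) : ℝ) *
          (ω (fun i => v (σ (Fin.castAdd r i))) (fun j => w (τ (Fin.castAdd s j))) *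
            η (fun i => v (σ (Fin.natAdd p i))) (fun j => w (τ (Fin.natAdd q j))))

/-- The contraction operator `c_g`, summing insertions of an orthonormal basis
vector into both slots. -/
noncomputable def dfContr {V : Type*} [NormedAddCommGroup V] [InnerProductSpace ℝ V]
    [FiniteDimensional ℝ V] {p q : ℕ} (ω : DoubleForm V (p + 1) (q + 1)) : DoubleForm V p q :=
  fun v w => ∑ i, ω (Fin.cons (stdOrthonormalBasis ℝ V i) v)
      (Fin.cons (stdOrthonormalBasis ℝ V i) w)

/-- Powers `g^p` of the metric in the algebra of double forms. -/
noncomputable def gpow (V : Type*) [NormedAddCommGroup V] [InnerProductSpace ℝ V] :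
    (p : ℕ) → DoubleForm V p p
  | 0 => fun _ _ => 1
  | p + 1 => dfMul (gpow V p) (gForm V)

/-- Powers `R^k` of a `(2,2)` double form. -/
noncomputable def dfPow {V : Type*} (R : DoubleForm V 2 2) :
    (k : ℕ) → DoubleForm V (2 * k) (2 * k)
  | 0 => fun _ _ => 1
  | k + 1 => dfMul (dfPow R k) R

/-- Full contraction `c_g^m` of an `(m,m)` double form, as a scalar. -/
noncomputable def dfFullContr {V : Type*} [NormedAddCommGroup V] [InnerProductSpace ℝ V]
    [FiniteDimensional ℝ V] : (m : ℕ) → DoubleForm V m m → ℝ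
  | 0, ω => ω (fun i => i.elim0) (fun i => i.elim0)
  | m + 1, ω => dfFullContr m (dfContr ω)

/-- Contraction `c_g^m` of an `(m+1,m+1)` double form down to a `(1,1)` form. -/
noncomputable def dfContrToOne {V : Type*} [NormedAddCommGroup V] [InnerProductSpace ℝ V]
    [FiniteDimensional ℝ V] : (m : ℕ) → DoubleForm V (m + 1) (m + 1) → DoubleForm V 1 1
  | 0, ω => ω
  | m + 1, ω => dfContrToOne m (dfContr ω)


section Aux
open scoped RealInnerProductSpace
open Equiv Matrix Finset

set_option linter.unusedSectionVars false

variable {V : Type*} [NormedAddCommGroup V] [InnerProductSpace ℝ V]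

noncomputable def Gm {m : ℕ} (v w : Fin m → V) : Matrix (Fin m) (Fin m) ℝ :=
  Matrix.of fun a b => ⟪v b, w a⟫

lemma Gm_det {m : ℕ} (v w : Fin m → V) :
    (Gm v w).det = ∑ σ : Perm (Fin m), ((Perm.sign σ : ℤ) : ℝ) * ∏ i, ⟪v i, w (σ i)⟫ := by
  rw [Matrix.det_apply]
  refine Finset.sum_congr rfl fun σ _ => ?_
  rw [Units.smul_def, zsmul_eq_mul]
  rfl

noncomputable def ext1 {p : ℕ} (π : Perm (Fin p)) : Perm (Fin (p + 1)) :=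
  finSumFinEquiv.permCongr (π.sumCongr (Equiv.refl (Fin 1)))

lemma ext1_castAdd {p : ℕ} (π : Perm (Fin p)) (i : Fin p) :
    ext1 π (Fin.castAdd 1 i) = Fin.castAdd 1 (π i) := by
  simp [ext1, Equiv.permCongr_apply]

lemma ext1_natAdd {p : ℕ} (π : Perm (Fin p)) (x : Fin 1) :
    ext1 π (Fin.natAdd p x) = Fin.natAdd p x := by
  simp [ext1, Equiv.permCongr_apply]

lemma sign_ext1 {p : ℕ} (π : Perm (Fin p)) : Perm.sign (ext1 π) = Perm.sign π := by
  rw [ext1, Equiv.Perm.sign_permCongr, Equiv.Perm.sign_sumCongr]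
  simp

lemma s_sq {α : Type*} [DecidableEq α] [Fintype α] (x : Perm α) :
    ((Perm.sign x : ℤ) : ℝ) * ((Perm.sign x : ℤ) : ℝ) = 1 := by
  rw [← Int.cast_mul, ← Units.val_mul, Int.units_mul_self]
  norm_num

lemma natAdd_zero_eq_last (p : ℕ) : Fin.natAdd p (0 : Fin 1) = Fin.last p := by
  ext; simp

lemma key_inner {p : ℕ} (v w : Fin (p + 1) → V) (σ : Perm (Fin (p + 1))) :
    ∑ τ : Perm (Fin (p + 1)), ((Perm.sign τ : ℤ) : ℝ) *
      ((Gm (fun i => v (σ (Fin.castAdd 1 i))) (fun i => w (τ (Fin.castAdd 1 i)))).det *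
        ⟪v (σ (Fin.natAdd p 0)), w (τ (Fin.natAdd p 0))⟫)
    = (p.factorial : ℝ) * ∑ τ : Perm (Fin (p + 1)),
        ((Perm.sign τ : ℤ) : ℝ) * ∏ k, ⟪v (σ k), w (τ k)⟫ := by
  simp only [Gm_det]
  calc
    ∑ τ : Perm (Fin (p + 1)), ((Perm.sign τ : ℤ) : ℝ) *
        ((∑ π : Perm (Fin p), ((Perm.sign π : ℤ) : ℝ) *
            ∏ i, ⟪v (σ (Fin.castAdd 1 i)), w (τ (Fin.castAdd 1 (π i)))⟫) *
          ⟪v (σ (Fin.natAdd p 0)), w (τ (Fin.natAdd p 0))⟫)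
      = ∑ π : Perm (Fin p), ∑ τ : Perm (Fin (p + 1)),
          ((Perm.sign τ : ℤ) : ℝ) * ((Perm.sign π : ℤ) : ℝ) *
            ((∏ i, ⟪v (σ (Fin.castAdd 1 i)), w (τ (Fin.castAdd 1 (π i)))⟫) *
              ⟪v (σ (Fin.natAdd p 0)), w (τ (Fin.natAdd p 0))⟫) := by
        rw [Finset.sum_comm]
        refine Finset.sum_congr rfl fun τ _ => ?_
        rw [Finset.sum_mul, Finset.mul_sum]
        refine Finset.sum_congr rfl fun π _ => by ring
    _ = ∑ π : Perm (Fin p), ∑ τ : Perm (Fin (p + 1)),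
          ((Perm.sign τ : ℤ) : ℝ) *
            ((∏ i, ⟪v (σ (Fin.castAdd 1 i)), w (τ (Fin.castAdd 1 i))⟫) *
              ⟪v (σ (Fin.natAdd p 0)), w (τ (Fin.natAdd p 0))⟫) := by
        refine Finset.sum_congr rfl fun π _ => ?_
        rw [← Equiv.sum_comp (Equiv.mulRight (ext1 π)⁻¹)
          (fun τ => ((Perm.sign τ : ℤ) : ℝ) * ((Perm.sign π : ℤ) : ℝ) *
            ((∏ i, ⟪v (σ (Fin.castAdd 1 i)), w (τ (Fin.castAdd 1 (π i)))⟫) *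
              ⟪v (σ (Fin.natAdd p 0)), w (τ (Fin.natAdd p 0))⟫))]
        refine Finset.sum_congr rfl fun τ _ => ?_
        have h1 : ∀ i : Fin p, (Equiv.mulRight (ext1 π)⁻¹ τ) (Fin.castAdd 1 (π i))
            = τ (Fin.castAdd 1 i) := by
          intro i
          simp only [Equiv.coe_mulRight, Perm.mul_apply]
          congr 1
          rw [Perm.inv_eq_iff_eq.mpr (ext1_castAdd π i).symm]
        have h2 : (Equiv.mulRight (ext1 π)⁻¹ τ) (Fin.natAdd p 0) = τ (Fin.natAdd p 0) := by
          simp only [Equiv.coe_mulRight, Perm.mul_apply]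
          congr 1
          rw [Perm.inv_eq_iff_eq.mpr (ext1_natAdd π 0).symm]
        have h3 : ((Perm.sign (Equiv.mulRight (ext1 π)⁻¹ τ) : ℤ) : ℝ)
            = ((Perm.sign τ : ℤ) : ℝ) * ((Perm.sign π : ℤ) : ℝ) := by
          simp only [Equiv.coe_mulRight]
          rw [Equiv.Perm.sign_mul, Equiv.Perm.sign_inv, sign_ext1, Units.val_mul, Int.cast_mul]
        simp only [h1, h2, h3]
        rw [mul_assoc ((Perm.sign τ : ℤ) : ℝ), mul_assoc ((Perm.sign τ : ℤ) : ℝ)]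
        congr 1
        rw [← mul_assoc, s_sq, one_mul]
    _ = (p.factorial : ℝ) * ∑ τ : Perm (Fin (p + 1)),
          ((Perm.sign τ : ℤ) : ℝ) * ∏ k, ⟪v (σ k), w (τ k)⟫ := by
        rw [Finset.sum_const, card_univ, Fintype.card_perm, Fintype.card_fin, nsmul_eq_mul]
        congr 1
        refine Finset.sum_congr rfl fun τ _ => ?_
        congr 1
        rw [Fin.prod_univ_castSucc, natAdd_zero_eq_last]
        rfl

lemma key_outer {p : ℕ} (v w : Fin (p + 1) → V) :
    ∑ σ : Perm (Fin (p + 1)), ((Perm.sign σ : ℤ) : ℝ) *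
      ∑ τ : Perm (Fin (p + 1)), ((Perm.sign τ : ℤ) : ℝ) * ∏ k, ⟪v (σ k), w (τ k)⟫
    = ((p + 1).factorial : ℝ) * (Gm v w).det := by
  rw [Gm_det]
  calc
    ∑ σ : Perm (Fin (p + 1)), ((Perm.sign σ : ℤ) : ℝ) *
        ∑ τ : Perm (Fin (p + 1)), ((Perm.sign τ : ℤ) : ℝ) * ∏ k, ⟪v (σ k), w (τ k)⟫
      = ∑ σ : Perm (Fin (p + 1)), ∑ ρ : Perm (Fin (p + 1)),
          ((Perm.sign ρ : ℤ) : ℝ) * ∏ k, ⟪v k, w (ρ k)⟫ := by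
        refine Finset.sum_congr rfl fun σ _ => ?_
        rw [Finset.mul_sum,
          ← Equiv.sum_comp (Equiv.mulRight σ)
            (fun τ => ((Perm.sign σ : ℤ) : ℝ) * (((Perm.sign τ : ℤ) : ℝ) * ∏ k, ⟪v (σ k), w (τ k)⟫))]
        refine Finset.sum_congr rfl fun ρ _ => ?_
        have hs : ((Perm.sign ((Equiv.mulRight σ) ρ) : ℤ) : ℝ)
            = ((Perm.sign ρ : ℤ) : ℝ) * ((Perm.sign σ : ℤ) : ℝ) := by
          simp only [Equiv.coe_mulRight]
          rw [Equiv.Perm.sign_mul, Units.val_mul, Int.cast_mul]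
        have hp : (∏ k, ⟪v (σ k), w (((Equiv.mulRight σ) ρ) k)⟫)
            = ∏ k, ⟪v k, w (ρ k)⟫ := by
          simp only [Equiv.coe_mulRight, Perm.mul_apply]
          exact Equiv.prod_comp σ (fun k => ⟪v k, w (ρ k)⟫)
        rw [hs, hp]
        linear_combination (((Perm.sign ρ : ℤ) : ℝ) * ∏ k, ⟪v k, w (ρ k)⟫) * s_sq σ
    _ = ((p + 1).factorial : ℝ) *
          ∑ ρ : Perm (Fin (p + 1)), ((Perm.sign ρ : ℤ) : ℝ) * ∏ k, ⟪v k, w (ρ k)⟫ := by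
        rw [Finset.sum_const, card_univ, Fintype.card_perm, Fintype.card_fin, nsmul_eq_mul]

lemma det_updateCol_sum'' {m : ℕ} {ι : Type*} [Fintype ι]
    (M : Matrix (Fin m) (Fin m) ℝ) (jc : Fin m) (c : ι → ℝ) (u : ι → Fin m → ℝ) :
    ∑ i, c i * (M.updateCol jc (u i)).det
      = (M.updateCol jc (fun a => ∑ i, c i * u i a)).det := by
  classical
  suffices H : ∀ s : Finset ι, ∑ i ∈ s, c i * (M.updateCol jc (u i)).det
      = (M.updateCol jc (fun a => ∑ i ∈ s, c i * u i a)).det from H univ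
  intro s
  induction s using Finset.induction_on with
  | empty =>
      simp only [Finset.sum_empty]
      rw [eq_comm, Matrix.det_eq_zero_of_column_eq_zero jc]
      intro i; simp
  | insert _ _ hnot ih =>
      rename_i a s
      rw [Finset.sum_insert hnot, ih]
      have : (fun x => ∑ i ∈ insert a s, c i * u i x)
          = (c a • u a) + (fun x => ∑ i ∈ s, c i * u i x) := by
        funext x; simp [Finset.sum_insert hnot]
      rw [this, Matrix.det_updateCol_add, Matrix.det_updateCol_smul]

lemma cons_succAbove_cycleRange {j : ℕ} (v : Fin j → V) (d : Fin j) (e' : Fin j) :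
    (Fin.cons (v d) v : Fin (j+1) → V) ((Fin.succ d).succAbove (d.cycleRange e')) = v e' := by
  rw [Fin.succAbove_cycleRange]
  by_cases h : e' = d
  · subst h
    rw [Equiv.swap_apply_right]
    exact Fin.cons_zero _ _
  · rw [Equiv.swap_apply_of_ne_of_ne (Fin.succ_ne_zero e')
      (fun hc => h (Fin.succ_injective _ hc))]
    exact Fin.cons_succ _ _ _

lemma base_eq {j : ℕ} (v w : Fin j → V) (d : Fin j) :
    Gm (fun e => (Fin.cons (v d) v : Fin (j+1) → V) ((Fin.succ d).succAbove e)) w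
      = (Gm v w).submatrix id ⇑d.cycleRange⁻¹ := by
  ext a e
  simp only [Gm, Matrix.of_apply, Matrix.submatrix_apply, id]
  congr 1
  conv_lhs => rw [show e = d.cycleRange ((d.cycleRange)⁻¹ e) from (Equiv.apply_symm_apply _ _).symm]
  rw [cons_succAbove_cycleRange]

lemma det_base {j : ℕ} (v w : Fin j → V) (d : Fin j) :
    (Gm (fun e => (Fin.cons (v d) v : Fin (j+1) → V) ((Fin.succ d).succAbove e)) w).det
      = (-1 : ℝ) ^ (d : ℕ) * (Gm v w).det := by
  rw [base_eq, Matrix.det_permute']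
  congr 1
  rw [map_inv, Fin.sign_cycleRange]
  simp [inv_pow]

variable [FiniteDimensional ℝ V]

lemma sum_det_cons {j : ℕ} (v w : Fin j → V) :
    ∑ i, (Gm (Fin.cons (stdOrthonormalBasis ℝ V i) v)
        (Fin.cons (stdOrthonormalBasis ℝ V i) w)).det
      = ((Module.finrank ℝ V : ℝ) - (j : ℝ)) * (Gm v w).det := by
  set b := stdOrthonormalBasis ℝ V with hbdef
  have hb : ∀ i i', ⟪b i, b i'⟫ = if i = i' then (1 : ℝ) else 0 :=
    fun i i' => orthonormal_iff_ite.mp b.orthonormal i i'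
  calc
    ∑ i, (Gm (Fin.cons (b i) v) (Fin.cons (b i) w)).det
      = ∑ i, ∑ c : Fin (j + 1),
          (-1 : ℝ) ^ (c : ℕ) * (Gm (Fin.cons (b i) v) (Fin.cons (b i) w)) 0 c *
            ((Gm (Fin.cons (b i) v) (Fin.cons (b i) w)).submatrix Fin.succ c.succAbove).det := by
        exact Finset.sum_congr rfl fun i _ => Matrix.det_succ_row_zero _
    _ = ∑ c : Fin (j + 1), ∑ i,
          (-1 : ℝ) ^ (c : ℕ) * (Gm (Fin.cons (b i) v) (Fin.cons (b i) w)) 0 c *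
            ((Gm (Fin.cons (b i) v) (Fin.cons (b i) w)).submatrix Fin.succ c.succAbove).det :=
        Finset.sum_comm
    _ = (∑ i, (-1 : ℝ) ^ ((0 : Fin (j+1)) : ℕ) *
            (Gm (Fin.cons (b i) v) (Fin.cons (b i) w)) 0 0 *
            ((Gm (Fin.cons (b i) v) (Fin.cons (b i) w)).submatrix Fin.succ
              (Fin.succAbove 0)).det)
        + ∑ d : Fin j, ∑ i,
            (-1 : ℝ) ^ ((d.succ : Fin (j+1)) : ℕ) *
              (Gm (Fin.cons (b i) v) (Fin.cons (b i) w)) 0 d.succ *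
              ((Gm (Fin.cons (b i) v) (Fin.cons (b i) w)).submatrix Fin.succ
                d.succ.succAbove).det := by
        rw [Fin.sum_univ_succ]
    _ = ((Module.finrank ℝ V : ℝ)) * (Gm v w).det
        + ∑ d : Fin j, (-(Gm v w).det) := by
        congr 1
        · have h1 : ∀ i, (Gm (Fin.cons (b i) v) (Fin.cons (b i) w)) 0 0 = 1 := by
            intro i
            simp [Gm, hb]
          have h2 : ∀ i, ((Gm (Fin.cons (b i) v) (Fin.cons (b i) w)).submatrix Fin.succ
              (Fin.succAbove 0)) = Gm v w := by
            intro i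
            ext a e
            simp [Gm, Matrix.submatrix_apply, Fin.succAbove_zero, Fin.cons_succ]
          simp only [h1, h2, Fin.val_zero, pow_zero, one_mul, mul_one]
          rw [Finset.sum_const, card_univ, Fintype.card_fin, nsmul_eq_mul]
        · refine Finset.sum_congr rfl fun d _ => ?_
          haveI : NeZero j := NeZero.of_pos d.pos
          set base := Gm (fun e => (Fin.cons (v d) v : Fin (j+1) → V) ((Fin.succ d).succAbove e)) w with hbase
          have h3 : ∀ i, (Gm (Fin.cons (b i) v) (Fin.cons (b i) w)) 0 d.succ = ⟪v d, b i⟫ := by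
            intro i
            simp [Gm, Fin.cons_succ]
          have h4 : ∀ i, ((Gm (Fin.cons (b i) v) (Fin.cons (b i) w)).submatrix Fin.succ
              d.succ.succAbove) = base.updateCol 0 (fun a => ⟪b i, w a⟫) := by
            intro i
            ext a e
            by_cases he : e = 0
            · subst he
              rw [Matrix.updateCol_self]
              simp [Gm, Matrix.submatrix_apply, Fin.succ_succAbove_zero, Fin.cons_succ]
            · have hne : d.succ.succAbove e ≠ 0 := by
                intro hc
                exact he (Fin.succAbove_right_injective
                  (by rw [hc, Fin.succ_succAbove_zero]))
              obtain ⟨k, hk⟩ := Fin.eq_succ_of_ne_zero hne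
              rw [Matrix.updateCol_ne he]
              simp only [Gm, Matrix.submatrix_apply, Matrix.of_apply, hbase, hk, Fin.cons_succ]
          simp only [h3, h4]
          rw [show ∑ i, (-1 : ℝ) ^ ((d.succ : Fin (j+1)) : ℕ) * ⟪v d, b i⟫ *
              (base.updateCol 0 (fun a => ⟪b i, w a⟫)).det
            = (-1 : ℝ) ^ ((d : ℕ) + 1) *
              ∑ i, ⟪v d, b i⟫ * (base.updateCol 0 (fun a => ⟪b i, w a⟫)).det from by
              rw [Finset.mul_sum]
              exact Finset.sum_congr rfl fun i _ => by rw [Fin.val_succ]; ring]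
          rw [det_updateCol_sum'']
          have h5 : (fun a => ∑ i, ⟪v d, b i⟫ * ⟪b i, w a⟫) = fun a => base a 0 := by
            funext a
            rw [b.sum_inner_mul_inner]
            simp [hbase, Gm, Fin.succ_succAbove_zero, Fin.cons_zero]
          rw [h5, Matrix.updateCol_eq_self, hbase, det_base]
          have hodd : ((-1 : ℝ)) ^ ((d : ℕ) + 1) * (-1) ^ (d : ℕ) = -1 := by
            rw [← pow_add]
            exact Odd.neg_one_pow ⟨d, by ring⟩
          linear_combination (Gm v w).det * hodd
    _ = ((Module.finrank ℝ V : ℝ) - (j : ℝ)) * (Gm v w).det := by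
        rw [Finset.sum_const, card_univ, Fintype.card_fin, nsmul_eq_mul]
        ring

lemma gpow_eq_det : ∀ (p : ℕ) (v w : Fin p → V),
    gpow V p v w = (p.factorial : ℝ) * (Gm v w).det := by
  intro p
  induction p with
  | zero =>
      intro v w
      simp [gpow, Gm, Matrix.det_fin_zero]
  | succ p ih =>
      intro v w
      have step : ∑ σ : Perm (Fin (p + 1)), ∑ τ : Perm (Fin (p + 1)),
          ((Perm.sign σ : ℤ) : ℝ) * ((Perm.sign τ : ℤ) : ℝ) *
            ((Gm (fun i => v (σ (Fin.castAdd 1 i))) (fun i => w (τ (Fin.castAdd 1 i)))).det *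
              ⟪v (σ (Fin.natAdd p 0)), w (τ (Fin.natAdd p 0))⟫)
          = (p.factorial : ℝ) * (((p + 1).factorial : ℝ) * (Gm v w).det) := by
        calc
          _ = ∑ σ : Perm (Fin (p + 1)), ((Perm.sign σ : ℤ) : ℝ) *
                ∑ τ : Perm (Fin (p + 1)), ((Perm.sign τ : ℤ) : ℝ) *
                  ((Gm (fun i => v (σ (Fin.castAdd 1 i)))
                      (fun i => w (τ (Fin.castAdd 1 i)))).det *
                    ⟪v (σ (Fin.natAdd p 0)), w (τ (Fin.natAdd p 0))⟫) := by
              refine Finset.sum_congr rfl fun σ _ => ?_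
              rw [Finset.mul_sum]
              exact Finset.sum_congr rfl fun τ _ => by ring
          _ = ∑ σ : Perm (Fin (p + 1)), ((Perm.sign σ : ℤ) : ℝ) *
                ((p.factorial : ℝ) * ∑ τ : Perm (Fin (p + 1)),
                  ((Perm.sign τ : ℤ) : ℝ) * ∏ k, ⟪v (σ k), w (τ k)⟫) := by
              exact Finset.sum_congr rfl fun σ _ => by rw [key_inner]
          _ = (p.factorial : ℝ) * ∑ σ : Perm (Fin (p + 1)), ((Perm.sign σ : ℤ) : ℝ) *
                ∑ τ : Perm (Fin (p + 1)),
                  ((Perm.sign τ : ℤ) : ℝ) * ∏ k, ⟪v (σ k), w (τ k)⟫ := by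
              rw [Finset.mul_sum]
              exact Finset.sum_congr rfl fun σ _ => by ring
          _ = _ := by rw [key_outer]
      show dfMul (gpow V p) (gForm V) v w = _
      unfold dfMul
      have hsummand : ∀ σ τ : Perm (Fin (p + 1)),
          ((Perm.sign σ : ℤ) : ℝ) * ((Perm.sign τ : ℤ) : ℝ) *
            (gpow V p (fun i => v (σ (Fin.castAdd 1 i))) (fun j => w (τ (Fin.castAdd 1 j))) *
              gForm V (fun i => v (σ (Fin.natAdd p i))) (fun j => w (τ (Fin.natAdd p j))))
          = (p.factorial : ℝ) * (((Perm.sign σ : ℤ) : ℝ) * ((Perm.sign τ : ℤ) : ℝ) *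
              ((Gm (fun i => v (σ (Fin.castAdd 1 i))) (fun i => w (τ (Fin.castAdd 1 i)))).det *
                ⟪v (σ (Fin.natAdd p 0)), w (τ (Fin.natAdd p 0))⟫)) := by
        intro σ τ
        rw [ih]
        show _ * (_ * (inner ℝ (v (σ (Fin.natAdd p 0))) (w (τ (Fin.natAdd p 0))) : ℝ)) = _
        ring
      simp only [hsummand]
      conv_lhs => rw [show (∑ σ : Perm (Fin (p + 1)), ∑ τ : Perm (Fin (p + 1)),
        (p.factorial : ℝ) * (((Perm.sign σ : ℤ) : ℝ) * ((Perm.sign τ : ℤ) : ℝ) *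
          ((Gm (fun i => v (σ (Fin.castAdd 1 i))) (fun i => w (τ (Fin.castAdd 1 i)))).det *
            ⟪v (σ (Fin.natAdd p 0)), w (τ (Fin.natAdd p 0))⟫)))
        = (p.factorial : ℝ) * ∑ σ : Perm (Fin (p + 1)), ∑ τ : Perm (Fin (p + 1)),
            ((Perm.sign σ : ℤ) : ℝ) * ((Perm.sign τ : ℤ) : ℝ) *
              ((Gm (fun i => v (σ (Fin.castAdd 1 i))) (fun i => w (τ (Fin.castAdd 1 i)))).det *
                ⟪v (σ (Fin.natAdd p 0)), w (τ (Fin.natAdd p 0))⟫) from by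
          rw [Finset.mul_sum]; exact Finset.sum_congr rfl fun σ _ => by rw [Finset.mul_sum]]
      rw [step]
      have h0 : (p.factorial : ℝ) ≠ 0 := Nat.cast_ne_zero.mpr p.factorial_ne_zero
      field_simp
      push_cast
      ring

end Aux

/-- Contraction of a power of the metric: `c_g (g^p) = p (n - p + 1) g^{p-1}`
for `1 ≤ p ≤ n`.  (Here `p = j+1` ranges over all `p ≥ 1`, so `p(n-p+1) = (j+1)(n-j)`.) -/
theorem contraction_metric_power
    {V : Type*} [NormedAddCommGroup V] [InnerProductSpace ℝ V] [FiniteDimensional ℝ V]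
    (n j : ℕ) (hn : Module.finrank ℝ V = n) (hp : j + 1 ≤ n) :
    dfContr (gpow V (j + 1)) = ((((j : ℝ) + 1) * ((n : ℝ) - (j : ℝ))) • gpow V j) := by
  funext v w
  have lhs : dfContr (gpow V (j + 1)) v w
      = ∑ i, gpow V (j + 1) (Fin.cons (stdOrthonormalBasis ℝ V i) v)
          (Fin.cons (stdOrthonormalBasis ℝ V i) w) := rfl
  rw [lhs]
  simp only [gpow_eq_det]
  rw [← Finset.mul_sum, sum_det_cons, hn]
  simp only [Pi.smul_apply, smul_eq_mul, gpow_eq_det]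
  push_cast [Nat.factorial_succ]
  ring
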